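/- Fix d ≥ 2, p = (p₁,…,p_d) ∈ (0,1)^d, and a pmf f on {0,1}^d with margins Σ_{i:i_m=1} f(i) = p_m for each m. Then the Lebesgue integral of the GFGM copula over the unit cube satisfies 2^d · ∫_{[0,1]^d} C_f(u) du = ( Π_{m=1}^d 1/(2-p_m) ) · Σ_{i∈{0,1}^d} f(i)·Π_{m=1}^d ( 2(1-p_m) + i_m ). Consequently, Spearman's rho derived from average lower orthant dependence equals ρ^{cL} = ((d+1)/(2^d - d - 1))·( ( Π_{m=1}^d 1/(2-p_m) )·Σ_{i∈{0,1}^d} f(i)·Π_{m=1}^d (2(1-p_m) + i_m) - 1 ). -/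

import Mathlib

open MeasureTheory ProbabilityTheory Set

/-- The real value (`0` or `1`) of a Bernoulli outcome. -/
noncomputable def bval (b : Bool) : ℝ := if b then 1 else 0


lemma pi_icc_integral {d : ℕ} (g : Fin d → ℝ → ℝ) :
    ∫ u in Icc (0 : Fin d → ℝ) 1, ∏ m, g m (u m)
      = ∏ m, ∫ x in Icc (0:ℝ) 1, g m x := by
  have h1 : Icc (0 : Fin d → ℝ) 1 = Set.pi univ (fun _ => Icc (0:ℝ) 1) := by
    rw [Set.pi_univ_Icc]; rfl
  rw [h1, ← integral_indicator (MeasurableSet.univ_pi fun _ => measurableSet_Icc)]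
  have h2 : ∀ u : Fin d → ℝ, (Set.pi univ (fun _ => Icc (0:ℝ) 1)).indicator
      (fun u => ∏ m, g m (u m)) u = ∏ m, (Icc (0:ℝ) 1).indicator (g m) (u m) := by
    intro u
    by_cases h : u ∈ Set.pi univ (fun _ => Icc (0:ℝ) 1)
    · rw [indicator_of_mem h]
      exact Finset.prod_congr rfl fun m _ => (indicator_of_mem (h m (Set.mem_univ m)) _).symm
    · rw [indicator_of_notMem h]
      simp only [Set.mem_pi, mem_univ, forall_true_left] at h
      push_neg at h
      obtain ⟨m, hnm⟩ := h
      exact (Finset.prod_eq_zero (Finset.mem_univ m) (indicator_of_notMem hnm _)).symm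
  simp_rw [h2]
  rw [MeasureTheory.integral_fintype_prod_volume_eq_prod (ι := Fin d) (fun m => (Icc (0:ℝ) 1).indicator (g m))]
  exact Finset.prod_congr rfl fun m _ => (integral_indicator measurableSet_Icc)

lemma one_dim {p : ℝ} (hp : p ∈ Ioo (0:ℝ) 1) (b : Bool) :
    ∫ x in Icc (0:ℝ) 1, (x ^ (1-p)⁻¹ - bval b * ((x ^ (1-p)⁻¹ - x)/p))
      = (2*(1-p) + bval b) / (2*(2-p)) := by
  obtain ⟨hp0, hp1⟩ := hp
  have h1p : (0:ℝ) < 1 - p := by linarith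
  have h2p : (0:ℝ) < 2 - p := by linarith
  have ha : (0:ℝ) < (1-p)⁻¹ := by positivity
  set a := (1-p)⁻¹ with hadef
  have hc : Continuous fun x : ℝ => x ^ a :=
    continuous_iff_continuousAt.2 fun x => Real.continuousAt_rpow_const x a (Or.inr ha.le)
  have hint1 : IntegrableOn (fun x : ℝ => x ^ a) (Icc 0 1) := hc.integrableOn_Icc
  have hint2 : IntegrableOn (fun x : ℝ => x) (Icc (0:ℝ) 1) := continuous_id.integrableOn_Icc
  have I1 : ∫ x in Icc (0:ℝ) 1, x ^ a = (1-p)/(2-p) := by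
    rw [integral_Icc_eq_integral_Ioc, ← intervalIntegral.integral_of_le zero_le_one,
      integral_rpow (Or.inl (by linarith))]
    rw [Real.one_rpow, Real.zero_rpow (by positivity)]
    have : a + 1 = (2-p)/(1-p) := by rw [hadef]; field_simp; ring
    rw [this, div_div_eq_mul_div]
    field_simp
    norm_num
  have I2 : ∫ x in Icc (0:ℝ) 1, x = 1/2 := by
    rw [integral_Icc_eq_integral_Ioc, ← intervalIntegral.integral_of_le zero_le_one,
      integral_id]
    norm_num
  have hrw : ∀ x : ℝ, (x ^ a - bval b * ((x ^ a - x)/p))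
      = (1 - bval b/p) * x ^ a + (bval b/p) * x := by
    intro x; field_simp; ring
  simp_rw [hrw]
  rw [integral_add ((hint1.const_mul _)) ((hint2.const_mul _)),
    integral_const_mul, integral_const_mul, I1, I2]
  cases b <;> simp [bval] <;> field_simp <;> ring

/-- Fix `d ≥ 2`, `p ∈ (0,1)^d` and a pmf `f` on `{0,1}^d` with margins `p`.  Then
`2^d ∫_{[0,1]^d} C_f(u) du = (Π_m 1/(2-p_m)) Σ_i f(i) Π_m (2(1-p_m) + i_m)`, and
consequently Spearman's rho from average lower orthant dependence equals
`ρ^{cL} = ((d+1)/(2^d-d-1)) ((Π_m 1/(2-p_m)) Σ_i f(i) Π_m (2(1-p_m)+i_m) - 1)`. -/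
theorem gfgm_rho_cL
    (d : ℕ) (hd : 2 ≤ d) (p : Fin d → ℝ) (hp : ∀ m, p m ∈ Ioo (0 : ℝ) 1)
    (f : (Fin d → Bool) → ℝ) (hf0 : ∀ i, 0 ≤ f i) (hf1 : ∑ i : Fin d → Bool, f i = 1)
    (hmarg : ∀ m, ∑ i ∈ Finset.univ.filter (fun i : Fin d → Bool => i m = true), f i = p m) :
    (2 : ℝ) ^ d * (∫ u in Icc (0 : Fin d → ℝ) 1, ∑ i : Fin d → Bool,
        f i * ∏ m, (u m ^ (1 - p m)⁻¹ - bval (i m) * ((u m ^ (1 - p m)⁻¹ - u m) / p m)))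
      = (∏ m, (2 - p m)⁻¹) *
          ∑ i : Fin d → Bool, f i * ∏ m, (2 * (1 - p m) + bval (i m))
    ∧ ((d : ℝ) + 1) / (2 ^ d - d - 1) *
        ((2 : ℝ) ^ d * (∫ u in Icc (0 : Fin d → ℝ) 1, ∑ i : Fin d → Bool,
          f i * ∏ m, (u m ^ (1 - p m)⁻¹ - bval (i m) * ((u m ^ (1 - p m)⁻¹ - u m) / p m))) - 1)
      = ((d : ℝ) + 1) / (2 ^ d - d - 1) *
          ((∏ m, (2 - p m)⁻¹) *
            (∑ i : Fin d → Bool, f i * ∏ m, (2 * (1 - p m) + bval (i m))) - 1) := by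
  have hrc : ∀ m : Fin d, Continuous fun x : ℝ => x ^ (1 - p m)⁻¹ := by
    intro m
    have h1 : (0:ℝ) < 1 - p m := by linarith [(hp m).2]
    have : (0:ℝ) < (1 - p m)⁻¹ := by positivity
    exact continuous_iff_continuousAt.2 fun x =>
      Real.continuousAt_rpow_const x _ (Or.inr this.le)
  have hgc : ∀ (m : Fin d) (b : Bool), Continuous
      (fun x : ℝ => x ^ (1 - p m)⁻¹ - bval b * ((x ^ (1 - p m)⁻¹ - x) / p m)) :=
    fun m b => (hrc m).sub (continuous_const.mul (((hrc m).sub continuous_id).div_const _))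
  have hic : ∀ i : Fin d → Bool, Continuous fun u : Fin d → ℝ =>
      f i * ∏ m, (u m ^ (1 - p m)⁻¹ - bval (i m) * ((u m ^ (1 - p m)⁻¹ - u m) / p m)) :=
    fun i => continuous_const.mul
      (continuous_finset_prod _ fun m _ => (hgc m (i m)).comp (continuous_apply m))
  have key : ∀ i : Fin d → Bool,
      ∫ u in Icc (0 : Fin d → ℝ) 1,
        ∏ m, (u m ^ (1 - p m)⁻¹ - bval (i m) * ((u m ^ (1 - p m)⁻¹ - u m) / p m))
      = ∏ m, ((2 * (1 - p m) + bval (i m)) / (2 * (2 - p m))) := by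
    intro i
    rw [pi_icc_integral (fun m x => x ^ (1 - p m)⁻¹ - bval (i m) * ((x ^ (1 - p m)⁻¹ - x) / p m))]
    exact Finset.prod_congr rfl fun m _ => one_dim (hp m) (i m)
  have main : (2 : ℝ) ^ d * (∫ u in Icc (0 : Fin d → ℝ) 1, ∑ i : Fin d → Bool,
        f i * ∏ m, (u m ^ (1 - p m)⁻¹ - bval (i m) * ((u m ^ (1 - p m)⁻¹ - u m) / p m)))
      = (∏ m, (2 - p m)⁻¹) *
          ∑ i : Fin d → Bool, f i * ∏ m, (2 * (1 - p m) + bval (i m)) := by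
    rw [integral_finset_sum _ fun i _ => (hic i).integrableOn_Icc]
    simp_rw [integral_const_mul, key]
    have split : ∀ i : Fin d → Bool,
        ∏ m, ((2 * (1 - p m) + bval (i m)) / (2 * (2 - p m)))
          = (2:ℝ)⁻¹ ^ d * ((∏ m, (2 - p m)⁻¹) * ∏ m, (2 * (1 - p m) + bval (i m))) := by
      intro i
      have : ∀ m : Fin d, ((2 * (1 - p m) + bval (i m)) / (2 * (2 - p m)))
          = (2:ℝ)⁻¹ * ((2 - p m)⁻¹ * (2 * (1 - p m) + bval (i m))) := by
        intro m; rw [div_eq_mul_inv, mul_inv]; ring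
      rw [Finset.prod_congr rfl fun m _ => this m, Finset.prod_mul_distrib,
        Finset.prod_const, Finset.prod_mul_distrib, Finset.card_univ, Fintype.card_fin]
    simp_rw [split]
    have hsum : ∑ i : Fin d → Bool, f i *
          ((2:ℝ)⁻¹ ^ d * ((∏ m, (2 - p m)⁻¹) * ∏ m, (2 * (1 - p m) + bval (i m))))
        = (2:ℝ)⁻¹ ^ d * ((∏ m, (2 - p m)⁻¹) *
            ∑ i : Fin d → Bool, f i * ∏ m, (2 * (1 - p m) + bval (i m))) := by
      rw [Finset.mul_sum, Finset.mul_sum]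
      exact Finset.sum_congr rfl fun i _ => by ring
    rw [hsum, ← mul_assoc, ← mul_pow]
    norm_num
  exact ⟨main, by rw [main]⟩
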